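/- There exist instances where the alternating algorithm returns a solution with objective value strictly below the average A(Q,c,d): for m = n ≥ 2, c = d = 0, Q with q_{11} = 1, q_{nn} = M for M > 3, and all other entries 0, the solution (x⁰, y⁰) with x⁰_1 = y⁰_1 = 1 and all other components 0 satisfies: y⁰ maximizes f(x⁰, ·) over {0,1}^n, x⁰ maximizes f(·, y⁰) over {0,1}^n, f(x⁰, y⁰) = 1, the maximum of f over all boolean pairs is M + 1, and A(Q,0,0) = (M+1)/4 > 1. -/

import Mathlib

open Finset

/-- The bipartite boolean quadratic objective f(x,y) = xᵀQy + c·x + d·y,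
extended to real vectors. -/
noncomputable def fobj (m n : ℕ) (Q : Fin m → Fin n → ℝ) (c : Fin m → ℝ) (d : Fin n → ℝ)
    (x : Fin m → ℝ) (y : Fin n → ℝ) : ℝ :=
  (∑ i, ∑ j, Q i j * x i * y j) + (∑ i, c i * x i) + (∑ j, d j * y j)

/-- A boolean vector viewed as a real 0-1 vector. -/
def bv {k : ℕ} (x : Fin k → Bool) : Fin k → ℝ := fun i => if x i then 1 else 0

/-- The average of f over all 2^(m+n) boolean pairs (x,y). -/
noncomputable def avgA (m n : ℕ) (Q : Fin m → Fin n → ℝ) (c : Fin m → ℝ) (d : Fin n → ℝ) : ℝ :=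
  (∑ x : Fin m → Bool, ∑ y : Fin n → Bool, fobj m n Q c d (bv x) (bv y)) / 2 ^ (m + n)

lemma sum_ind (k : ℕ) (a : Fin k) :
    ∑ x : Fin k → Bool, (if x a then (1:ℝ) else 0) = 2 ^ k / 2 := by
  have flip : ∑ x : Fin k → Bool, (if x a then (0:ℝ) else 1)
      = ∑ x : Fin k → Bool, (if x a then (1:ℝ) else 0) := by
    have hinv : Function.Involutive (fun x : Fin k → Bool => Function.update x a (!x a)) := by
      intro x
      funext i
      by_cases h : i = a <;> simp [Function.update, h]
    have h2 := Equiv.sum_comp (Function.Involutive.toPerm _ hinv)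
      (fun x : Fin k → Bool => (if x a then (0:ℝ) else 1))
    rw [← h2]
    apply Finset.sum_congr rfl
    intro x _
    by_cases h : x a <;> simp [Function.Involutive.coe_toPerm, Function.update_self, h]
  have tot : ∑ x : Fin k → Bool, ((if x a then (1:ℝ) else 0) + (if x a then (0:ℝ) else 1))
      = 2 ^ k := by
    have h1 : ∀ x : Fin k → Bool, (if x a then (1:ℝ) else 0) + (if x a then (0:ℝ) else 1) = 1 := by
      intro x; by_cases h : x a <;> simp [h]
    rw [Finset.sum_congr rfl fun x _ => h1 x]
    simp [Finset.card_univ]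
  rw [Finset.sum_add_distrib, flip] at tot
  linarith

lemma fkey (n : ℕ) (hn : 2 ≤ n) (h0 : 0 < n) (h1 : n - 1 < n) (M : ℝ)
    (Q : Fin n → Fin n → ℝ)
    (hQ : Q = fun i j =>
      if i = (⟨0, h0⟩ : Fin n) ∧ j = (⟨0, h0⟩ : Fin n) then 1
      else if i = (⟨n - 1, h1⟩ : Fin n) ∧ j = (⟨n - 1, h1⟩ : Fin n) then M
      else 0)
    (x y : Fin n → Bool) :
    fobj n n Q (fun _ => 0) (fun _ => 0) (bv x) (bv y)
      = (if x ⟨0, h0⟩ then (1:ℝ) else 0) * (if y ⟨0, h0⟩ then (1:ℝ) else 0)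
        + M * ((if x ⟨n-1, h1⟩ then (1:ℝ) else 0) * (if y ⟨n-1, h1⟩ then (1:ℝ) else 0)) := by
  have hne : (⟨0, by omega⟩ : Fin n) ≠ ⟨n - 1, by omega⟩ := by
    simp [Fin.ext_iff]; omega
  subst hQ
  simp only [fobj, zero_mul, Finset.sum_const_zero, add_zero, bv]
  have step : ∀ i j : Fin n,
      (if i = (⟨0, by omega⟩ : Fin n) ∧ j = (⟨0, by omega⟩ : Fin n) then (1:ℝ)
        else if i = (⟨n - 1, by omega⟩ : Fin n) ∧ j = (⟨n - 1, by omega⟩ : Fin n) then M else 0)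
        * (if x i then 1 else 0) * (if y j then 1 else 0)
      = (if i = (⟨0, by omega⟩ : Fin n) then (if j = (⟨0, by omega⟩ : Fin n) then
            (if x i then (1:ℝ) else 0) * (if y j then 1 else 0) else 0) else 0)
        + (if i = (⟨n-1, by omega⟩ : Fin n) then (if j = (⟨n-1, by omega⟩ : Fin n) then
            M * ((if x i then (1:ℝ) else 0) * (if y j then 1 else 0)) else 0) else 0) := by
    intro i j
    by_cases h1 : i = (⟨0, by omega⟩ : Fin n) <;>
      by_cases h2 : j = (⟨0, by omega⟩ : Fin n) <;>
      by_cases h3 : i = (⟨n-1, by omega⟩ : Fin n) <;>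
      by_cases h4 : j = (⟨n-1, by omega⟩ : Fin n) <;>
      simp_all
  rw [Finset.sum_congr rfl fun i _ => Finset.sum_congr rfl fun j _ => step i j]
  simp [Finset.sum_add_distrib, Finset.sum_ite_eq']

theorem alternating_algorithm_bad_local_opt (n : ℕ) (hn : 2 ≤ n) (M : ℝ) (hM : 3 < M)
    (Q : Fin n → Fin n → ℝ)
    (hQ : Q = fun i j =>
      if i = (⟨0, by omega⟩ : Fin n) ∧ j = (⟨0, by omega⟩ : Fin n) then 1
      else if i = (⟨n - 1, by omega⟩ : Fin n) ∧ j = (⟨n - 1, by omega⟩ : Fin n) then M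
      else 0)
    (x0 : Fin n → Bool) (hx0 : ∀ i, x0 i = true ↔ i = (⟨0, by omega⟩ : Fin n))
    (y0 : Fin n → Bool) (hy0 : ∀ j, y0 j = true ↔ j = (⟨0, by omega⟩ : Fin n)) :
    (∀ y : Fin n → Bool,
        fobj n n Q (fun _ => 0) (fun _ => 0) (bv x0) (bv y)
          ≤ fobj n n Q (fun _ => 0) (fun _ => 0) (bv x0) (bv y0))
    ∧ (∀ x : Fin n → Bool,
        fobj n n Q (fun _ => 0) (fun _ => 0) (bv x) (bv y0)
          ≤ fobj n n Q (fun _ => 0) (fun _ => 0) (bv x0) (bv y0))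
    ∧ fobj n n Q (fun _ => 0) (fun _ => 0) (bv x0) (bv y0) = 1
    ∧ IsGreatest {v : ℝ | ∃ (x : Fin n → Bool) (y : Fin n → Bool),
        v = fobj n n Q (fun _ => 0) (fun _ => 0) (bv x) (bv y)} (M + 1)
    ∧ avgA n n Q (fun _ => 0) (fun _ => 0) = (M + 1) / 4
    ∧ 1 < (M + 1) / 4 := by
  have hne : (⟨0, by omega⟩ : Fin n) ≠ (⟨n - 1, by omega⟩ : Fin n) := by
    simp [Fin.ext_iff]; omega
  have hx00 : x0 (⟨0, by omega⟩ : Fin n) = true := (hx0 _).2 rfl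
  have hy00 : y0 (⟨0, by omega⟩ : Fin n) = true := (hy0 _).2 rfl
  have hx0N : x0 (⟨n - 1, by omega⟩ : Fin n) = false := by
    rw [← Bool.not_eq_true]; rw [hx0]; exact fun h => hne h.symm
  have hy0N : y0 (⟨n - 1, by omega⟩ : Fin n) = false := by
    rw [← Bool.not_eq_true]; rw [hy0]; exact fun h => hne h.symm
  have key := fkey n hn (by omega) (by omega) M Q hQ
  have hval : fobj n n Q (fun _ => 0) (fun _ => 0) (bv x0) (bv y0) = 1 := by
    rw [key]; simp [hx00, hy00, hx0N, hy0N]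
  have hind : ∀ (z : Fin n → Bool) (a : Fin n),
      (0:ℝ) ≤ (if z a then (1:ℝ) else 0) ∧ (if z a then (1:ℝ) else 0) ≤ 1 := by
    intro z a; by_cases h : z a <;> simp [h]
  refine ⟨?_, ?_, hval, ⟨⟨fun _ => true, fun _ => true, ?_⟩, ?_⟩, ?_, by linarith⟩
  · intro y
    rw [key, hval]
    simp only [hx00, hx0N, if_true, Bool.false_eq_true, if_false, mul_zero, zero_mul,
      add_zero, one_mul]
    exact (hind y _).2
  · intro x
    rw [key, hval]
    simp only [hy00, hy0N, if_true, Bool.false_eq_true, if_false, mul_zero, zero_mul,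
      add_zero, mul_one]
    exact (hind x _).2
  · rw [key]; simp; ring
  · rintro v ⟨x, y, rfl⟩
    rw [key]
    have hprod : ∀ (a b : Fin n),
        (0:ℝ) ≤ (if x a then (1:ℝ) else 0) * (if y b then (1:ℝ) else 0)
          ∧ (if x a then (1:ℝ) else 0) * (if y b then (1:ℝ) else 0) ≤ 1 := by
      intro a b
      by_cases h : x a <;> by_cases h' : y b <;> simp [h, h']
    have p1 := hprod (⟨0, by omega⟩ : Fin n) (⟨0, by omega⟩ : Fin n)
    have p2 := hprod (⟨n - 1, by omega⟩ : Fin n) (⟨n - 1, by omega⟩ : Fin n)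
    have hm : M * ((if x (⟨n - 1, by omega⟩ : Fin n) then (1:ℝ) else 0)
        * (if y (⟨n - 1, by omega⟩ : Fin n) then (1:ℝ) else 0)) ≤ M * 1 :=
      mul_le_mul_of_nonneg_left p2.2 (by linarith)
    linarith [p1.2]
  · unfold avgA
    rw [Finset.sum_congr rfl fun x _ => Finset.sum_congr rfl fun y _ => key x y]
    have expand : ∀ x : Fin n → Bool,
        ∑ y : Fin n → Bool,
          ((if x ⟨0, by omega⟩ then (1:ℝ) else 0) * (if y ⟨0, by omega⟩ then (1:ℝ) else 0)
            + M * ((if x ⟨n-1, by omega⟩ then (1:ℝ) else 0) * (if y ⟨n-1, by omega⟩ then (1:ℝ) else 0)))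
        = (if x ⟨0, by omega⟩ then (1:ℝ) else 0) * (2 ^ n / 2)
            + M * ((if x ⟨n-1, by omega⟩ then (1:ℝ) else 0) * (2 ^ n / 2)) := by
      intro x
      rw [Finset.sum_add_distrib, ← Finset.mul_sum, sum_ind, ← Finset.mul_sum, ← Finset.mul_sum,
        sum_ind]
    rw [Finset.sum_congr rfl fun x _ => expand x]
    rw [Finset.sum_add_distrib, ← Finset.sum_mul, sum_ind, ← Finset.mul_sum, ← Finset.sum_mul,
      sum_ind]
    have h2 : (2:ℝ) ^ (n + n) = (2 ^ n / 2) * (2 ^ n / 2) * 4 := by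
      rw [pow_add]; ring
    rw [h2]
    have hpos : (0:ℝ) < 2 ^ n / 2 := by positivity
    field_simp
    ring
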